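/- Let B ≥ 1, let S ⊆ [−B, B]² be a 2-simplex (the convex hull of three affinely independent points of ℝ²), let ℓ : ℝ² → ℝ be an affine function, and let f : ℝ² → ℝ be defined by f(x) = ℓ(x) for x ∈ S and f(x) = 0 for x ∉ S. Then for every δ > 0 there exist, for k = 1, 2, 3, real numbers ρₖ, γ₁ₖ, γ₂ₖ, γ₃ₖ, strictly positive reals μₖ, and affine functions hₖ, hₖ′, hₖ″ : ℝ² → ℝ, such that, writing Fₖ(x) = σ(hₖ(x) − μₖ·σ(hₖ″(x))) and Fₖ′(x) = σ(hₖ′(x) − μₖ·σ(hₖ″(x))), the function g(x) = Σ_{k=1}^{3} ρₖ·σ(γ₁ₖ·Fₖ(x) + γ₂ₖ·Fₖ′(x) + γ₃ₖ) satisfies: the Lebesgue measure of { x ∈ [−B, B]² : g(x) ≠ f(x) } is less than δ. (This is the deep-network half of the two-dimensional simplex representation lemma.) -/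

import Mathlib

open MeasureTheory

/-- A function `(Fin D → ℝ) → ℝ` is affine if it is of the form
`x ↦ ∑ d, w d * x d + r`. -/
def IsAffineFn {D : ℕ} (g : (Fin D → ℝ) → ℝ) : Prop :=
  ∃ (w : Fin D → ℝ) (r : ℝ), ∀ x, g x = (∑ d, w d * x d) + r

private lemma abs_split {ε t : ℝ} (h : ε ≤ |t|) : ε ≤ t ∨ ε ≤ -t := by
  rcases abs_cases t with ⟨h1, _⟩ | ⟨h1, _⟩
  · left; rw [← h1]; exact h
  · right; rw [← h1]; exact h

private lemma key_eq (A p q s M μ M₂ CL C0 C2 ε : ℝ)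
    (hε : 0 < ε)
    (hA : |A| ≤ CL) (hp : |p| ≤ C0) (hs : |s| ≤ C2)
    (hM : CL + 1 ≤ M * ε) (hμ : CL + M * C0 + C2 ≤ μ * ε)
    (hM₂ : CL + M * C0 ≤ M₂ * ε)
    (hμ0 : 0 ≤ μ) (hM₂0 : 0 ≤ M₂)
    (hpε : ε ≤ |p|) (hqε : ε ≤ |q|) (hsε : ε ≤ |s|) :
    max (max (A + M * p - μ * max (-q) 0) 0 - M₂ * max (-s - μ * max (-q) 0) 0) 0
      - max (max (M * p - μ * max (-q) 0) 0 - M₂ * max (-s - μ * max (-q) 0) 0) 0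
      = if 0 ≤ p ∧ 0 ≤ q ∧ 0 ≤ s then A else 0 := by
  have hCL : 0 ≤ CL := le_trans (abs_nonneg _) hA
  have hC0 : 0 ≤ C0 := le_trans (abs_nonneg _) hp
  have hC2 : 0 ≤ C2 := le_trans (abs_nonneg _) hs
  have hM0 : 0 < M := by nlinarith
  have hA1 := abs_le.mp hA
  have hp1 := abs_le.mp hp
  have hs1 := abs_le.mp hs
  have hMp : M * p ≤ M * C0 := mul_le_mul_of_nonneg_left hp1.2 hM0.le
  have hMp' : -(M * C0) ≤ M * p := by nlinarith [hp1.1]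
  have hMC0 : 0 ≤ M * C0 := mul_nonneg hM0.le hC0
  rcases abs_split hqε with hq | hq
  · -- ε ≤ q
    have h1 : max (-q) 0 = 0 := max_eq_right (by linarith)
    rw [h1]
    simp only [mul_zero, sub_zero]
    rcases abs_split hsε with hs' | hs'
    · -- ε ≤ s
      have h2 : max (-s) 0 = 0 := max_eq_right (by linarith)
      rw [h2]
      simp only [mul_zero, sub_zero]
      rw [max_eq_left (le_max_right (A + M * p) 0), max_eq_left (le_max_right (M * p) 0)]
      rcases abs_split hpε with hp' | hp'
      · have hMε : M * ε ≤ M * p := mul_le_mul_of_nonneg_left hp' hM0.le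
        rw [max_eq_left (by linarith [hA1.1]), max_eq_left (by linarith),
          if_pos ⟨by linarith, by linarith, by linarith⟩]
        ring
      · have hMε : M * ε ≤ M * -p := mul_le_mul_of_nonneg_left hp' hM0.le
        rw [max_eq_right (by linarith [hA1.2]), max_eq_right (by linarith),
          if_neg (by rintro ⟨hc, -, -⟩; linarith)]
        ring
    · -- ε ≤ -s
      have h2 : max (-s) 0 = -s := max_eq_left (by linarith)
      rw [h2]
      have hM₂s : M₂ * ε ≤ M₂ * -s := mul_le_mul_of_nonneg_left hs' hM₂0
      have e1 : max (A + M * p) 0 - M₂ * -s ≤ 0 := by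
        rcases le_or_gt (A + M * p) 0 with h | h
        · rw [max_eq_right h]; linarith
        · rw [max_eq_left h.le]; linarith [hA1.2]
      have e2 : max (M * p) 0 - M₂ * -s ≤ 0 := by
        rcases le_or_gt (M * p) 0 with h | h
        · rw [max_eq_right h]; linarith
        · rw [max_eq_left h.le]; linarith
      rw [max_eq_right e1, max_eq_right e2, if_neg (by rintro ⟨-, -, hc⟩; linarith)]
      ring
  · -- ε ≤ -q
    have h1 : max (-q) 0 = -q := max_eq_left (by linarith)
    rw [h1]
    have hμq : μ * ε ≤ μ * -q := mul_le_mul_of_nonneg_left hq hμ0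
    have e1 : max (A + M * p - μ * -q) 0 = 0 := max_eq_right (by linarith [hA1.2])
    have e2 : max (-s - μ * -q) 0 = 0 := max_eq_right (by linarith [hs1.1])
    have e3 : max (M * p - μ * -q) 0 = 0 := max_eq_right (by linarith)
    rw [e1, e2, e3, if_neg (by rintro ⟨-, hc, -⟩; linarith)]
    simp

private lemma slice_vol (bb d ε : ℝ) (hb : bb ≠ 0) :
    volume {y : ℝ | |bb * y + d| < ε} ≤ ENNReal.ofReal (2 * ε / |bb|) := by
  rcases hb.lt_or_gt with hneg | hpos
  · have hsub : {y : ℝ | |bb * y + d| < ε} ⊆ Set.Icc ((ε - d) / bb) ((-ε - d) / bb) := by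
      intro y hy
      rw [Set.mem_setOf_eq, abs_lt] at hy
      constructor
      · rw [div_le_iff_of_neg hneg]; nlinarith [hy.2]
      · rw [le_div_iff_of_neg hneg]; nlinarith [hy.1]
    refine le_trans (measure_mono hsub) ?_
    rw [Real.volume_Icc]
    apply ENNReal.ofReal_le_ofReal
    rw [abs_of_neg hneg]
    apply le_of_eq
    field_simp
    ring
  · have hsub : {y : ℝ | |bb * y + d| < ε} ⊆ Set.Icc ((-ε - d) / bb) ((ε - d) / bb) := by
      intro y hy
      rw [Set.mem_setOf_eq, abs_lt] at hy
      constructor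
      · rw [div_le_iff₀ hpos]; nlinarith [hy.1]
      · rw [le_div_iff₀ hpos]; nlinarith [hy.2]
    refine le_trans (measure_mono hsub) ?_
    rw [Real.volume_Icc]
    apply ENNReal.ofReal_le_ofReal
    rw [abs_of_pos hpos]
    apply le_of_eq
    field_simp
    ring

private lemma prod_strip_meas (B c0 c1 r ε : ℝ) :
    MeasurableSet {p : ℝ × ℝ | (p.1 ∈ Set.Icc (-B) B ∧ p.2 ∈ Set.Icc (-B) B) ∧
      |c0 * p.1 + c1 * p.2 + r| < ε} := by
  have h1 : MeasurableSet {p : ℝ × ℝ | p.1 ∈ Set.Icc (-B) B} :=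
    measurable_fst measurableSet_Icc
  have h2 : MeasurableSet {p : ℝ × ℝ | p.2 ∈ Set.Icc (-B) B} :=
    measurable_snd measurableSet_Icc
  have h3 : MeasurableSet {p : ℝ × ℝ | |c0 * p.1 + c1 * p.2 + r| < ε} := by
    apply measurableSet_lt _ measurable_const
    exact (((measurable_fst.const_mul c0).add (measurable_snd.const_mul c1)).add_const r).abs
  exact (h1.inter h2).inter h3

private lemma prod_strip (B c0 c1 r ε : ℝ) (hB : 0 < B) (hc1 : c1 ≠ 0) :
    volume {p : ℝ × ℝ | (p.1 ∈ Set.Icc (-B) B ∧ p.2 ∈ Set.Icc (-B) B) ∧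
        |c0 * p.1 + c1 * p.2 + r| < ε}
      ≤ ENNReal.ofReal (2 * B) * ENNReal.ofReal (2 * ε / |c1|) := by
  rw [Measure.volume_eq_prod, Measure.prod_apply (prod_strip_meas B c0 c1 r ε)]
  have hbound : ∀ x : ℝ,
      volume (Prod.mk x ⁻¹' {p : ℝ × ℝ | (p.1 ∈ Set.Icc (-B) B ∧ p.2 ∈ Set.Icc (-B) B) ∧
        |c0 * p.1 + c1 * p.2 + r| < ε})
      ≤ (Set.Icc (-B) B).indicator (fun _ => ENNReal.ofReal (2 * ε / |c1|)) x := by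
    intro x
    by_cases hx : x ∈ Set.Icc (-B) B
    · rw [Set.indicator_of_mem hx]
      refine le_trans (measure_mono ?_) (slice_vol c1 (c0 * x + r) ε hc1)
      intro y hy
      simp only [Set.mem_preimage, Set.mem_setOf_eq] at hy ⊢
      rw [show c1 * y + (c0 * x + r) = c0 * x + c1 * y + r by ring]
      exact hy.2
    · have hempty : Prod.mk x ⁻¹' {p : ℝ × ℝ | (p.1 ∈ Set.Icc (-B) B ∧ p.2 ∈ Set.Icc (-B) B) ∧
          |c0 * p.1 + c1 * p.2 + r| < ε} = ∅ := by
        ext y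
        simp only [Set.mem_preimage, Set.mem_setOf_eq, Set.mem_empty_iff_false, iff_false]
        rintro ⟨⟨h1, -⟩, -⟩
        exact hx h1
      rw [hempty, measure_empty, Set.indicator_of_notMem hx]
  refine le_trans (lintegral_mono hbound) ?_
  rw [lintegral_indicator measurableSet_Icc, setLIntegral_const, Real.volume_Icc]
  rw [show B - -B = 2 * B by ring, mul_comm]

private lemma strip_small (B δ' : ℝ) (hB : 0 < B) (hδ : 0 < δ') (w0 w1 r : ℝ)
    (hw : w0 ≠ 0 ∨ w1 ≠ 0) :
    ∃ ε : ℝ, 0 < ε ∧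
      volume {x : Fin 2 → ℝ | x ∈ Set.Icc (fun _ => -B) (fun _ => B) ∧
          |w0 * x 0 + w1 * x 1 + r| < ε}
        < ENNReal.ofReal δ' := by
  set m := max |w0| |w1| with hm
  have hm0 : 0 < m := by
    rcases hw with h | h
    · exact lt_max_of_lt_left (abs_pos.mpr h)
    · exact lt_max_of_lt_right (abs_pos.mpr h)
  set ε := m * δ' / (16 * B) with hεdef
  have hε0 : 0 < ε := by positivity
  refine ⟨ε, hε0, ?_⟩
  set T : Set (ℝ × ℝ) := {p : ℝ × ℝ | (p.1 ∈ Set.Icc (-B) B ∧ p.2 ∈ Set.Icc (-B) B) ∧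
    |w0 * p.1 + w1 * p.2 + r| < ε} with hT
  have hpre : {x : Fin 2 → ℝ | x ∈ Set.Icc (fun _ => -B) (fun _ => B) ∧
      |w0 * x 0 + w1 * x 1 + r| < ε} = MeasurableEquiv.finTwoArrow ⁻¹' T := by
    ext x
    simp only [Set.mem_preimage, hT, Set.mem_setOf_eq, MeasurableEquiv.finTwoArrow_apply,
      Set.mem_Icc, Pi.le_def]
    constructor
    · rintro ⟨⟨hle, hge⟩, habs⟩
      exact ⟨⟨⟨hle 0, hge 0⟩, ⟨hle 1, hge 1⟩⟩, habs⟩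
    · rintro ⟨⟨⟨h1, h2⟩, ⟨h3, h4⟩⟩, habs⟩
      refine ⟨⟨?_, ?_⟩, habs⟩ <;> intro i <;> fin_cases i <;> assumption
  have hTmeas : MeasurableSet T := prod_strip_meas B w0 w1 r ε
  rw [hpre, (volume_preserving_finTwoArrow ℝ).measure_preimage hTmeas.nullMeasurableSet]
  have hfin : volume T ≤ ENNReal.ofReal (2 * B) * ENNReal.ofReal (2 * ε / m) := by
    rcases le_total |w0| |w1| with hcmp | hcmp
    · have hmw : m = |w1| := max_eq_right hcmp
      have hw1 : w1 ≠ 0 := by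
        intro h
        rw [h, abs_zero] at hmw
        exact absurd hmw hm0.ne'
      rw [hmw]
      exact prod_strip B w0 w1 r ε hB hw1
    · have hmw : m = |w0| := max_eq_left hcmp
      have hw0 : w0 ≠ 0 := by
        intro h
        rw [h, abs_zero] at hmw
        exact absurd hmw hm0.ne'
      have hswap : T = Prod.swap ⁻¹' {p : ℝ × ℝ | (p.1 ∈ Set.Icc (-B) B ∧
          p.2 ∈ Set.Icc (-B) B) ∧ |w1 * p.1 + w0 * p.2 + r| < ε} := by
        ext p
        simp only [hT, Set.mem_preimage, Set.mem_setOf_eq, Prod.fst_swap, Prod.snd_swap]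
        have harg : w1 * p.2 + w0 * p.1 + r = w0 * p.1 + w1 * p.2 + r := by ring
        constructor
        · rintro ⟨⟨h1, h2⟩, h3⟩
          refine ⟨⟨h2, h1⟩, ?_⟩
          rw [harg]
          exact h3
        · rintro ⟨⟨h1, h2⟩, h3⟩
          refine ⟨⟨h2, h1⟩, ?_⟩
          rw [← harg]
          exact h3
      rw [hswap, Measure.volume_eq_prod,
        Measure.measurePreserving_swap.measure_preimage
          (prod_strip_meas B w1 w0 r ε).nullMeasurableSet, ← Measure.volume_eq_prod, hmw]
      exact prod_strip B w1 w0 r ε hB hw0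
  refine lt_of_le_of_lt hfin ?_
  rw [← ENNReal.ofReal_mul (by positivity)]
  rw [ENNReal.ofReal_lt_ofReal_iff hδ]
  have : 2 * B * (2 * ε / m) = δ' / 4 := by
    rw [hεdef]
    field_simp
    ring
  rw [this]
  linarith

/-- The deep-network half of the two-dimensional simplex representation lemma:
the function `f` equal to the affine `ℓ` on a 2-simplex `S ⊆ [-B, B]²` and `0`
outside is represented, up to arbitrarily small Lebesgue measure, by
`g(x) = ∑ₖ ρₖ · σ(γ₁ₖ·Fₖ(x) + γ₂ₖ·Fₖ'(x) + γ₃ₖ)` with the fan-shaped terms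
`Fₖ(x) = σ(hₖ(x) - μₖ·σ(hₖ''(x)))` and `Fₖ'(x) = σ(hₖ'(x) - μₖ·σ(hₖ''(x)))`.
Here `σ(u) = max u 0` is ReLU. -/
theorem simplex_deep_representation_2d (B : ℝ) (hB : 1 ≤ B)
    (v : Fin 3 → (Fin 2 → ℝ)) (hv : AffineIndependent ℝ v)
    (S : Set (Fin 2 → ℝ)) (hS : S = convexHull ℝ (Set.range v))
    (hSB : S ⊆ Set.Icc (fun _ => -B) (fun _ => B))
    (ℓ f : (Fin 2 → ℝ) → ℝ) (hℓ : IsAffineFn ℓ)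
    (hf : f = S.indicator ℓ) :
    ∀ δ > (0 : ℝ),
      ∃ (ρ γ₁ γ₂ γ₃ μ : Fin 3 → ℝ) (h h' h'' : Fin 3 → (Fin 2 → ℝ) → ℝ),
        (∀ k, 0 < μ k) ∧ (∀ k, IsAffineFn (h k)) ∧ (∀ k, IsAffineFn (h' k)) ∧
        (∀ k, IsAffineFn (h'' k)) ∧
        volume {x : Fin 2 → ℝ | x ∈ Set.Icc (fun _ => -B) (fun _ => (B : ℝ)) ∧
            (∑ k : Fin 3, ρ k *
              max (γ₁ k * max (h k x - μ k * max (h'' k x) 0) 0 +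
                   γ₂ k * max (h' k x - μ k * max (h'' k x) 0) 0 + γ₃ k) 0) ≠ f x} <
          ENNReal.ofReal δ := by
  intro δ hδ
  obtain ⟨wl, rl, hl⟩ := hℓ
  have hB0 : (0:ℝ) < B := lt_of_lt_of_le one_pos hB
  set a := v 0 with ha
  set b := v 1 with hb
  set c := v 2 with hc
  set D := (b 0 - a 0) * (c 1 - a 1) - (b 1 - a 1) * (c 0 - a 0) with hD
  -- the determinant is nonzero
  have hDne : D ≠ 0 := by
    intro hD0
    have hexpr : (b 0 - a 0) * (c 1 - a 1) - (b 1 - a 1) * (c 0 - a 0) = 0 := by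
      rw [← hD]; exact hD0
    have hcol : Collinear ℝ (Set.range v) := by
      rw [collinear_iff_of_mem (Set.mem_range_self 0)]
      by_cases hba : b = a
      · refine ⟨c - a, ?_⟩
        rintro p ⟨k, rfl⟩
        fin_cases k
        · exact ⟨0, by simp⟩
        · refine ⟨0, ?_⟩
          show b = (0:ℝ) • (c - a) +ᵥ a
          rw [hba]; simp
        · refine ⟨1, ?_⟩
          show c = (1:ℝ) • (c - a) +ᵥ a
          simp
      · refine ⟨b - a, ?_⟩
        rintro p ⟨k, rfl⟩
        fin_cases k
        · exact ⟨0, by simp⟩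
        · refine ⟨1, ?_⟩
          show b = (1:ℝ) • (b - a) +ᵥ a
          simp
        · have hbne : ∃ d : Fin 2, b d ≠ a d := by
            by_contra hcon
            push_neg at hcon
            exact hba (funext hcon)
          obtain ⟨d, hd⟩ := hbne
          fin_cases d
          · have hsubne : b 0 - a 0 ≠ 0 := sub_ne_zero.mpr hd
            refine ⟨(c 0 - a 0) / (b 0 - a 0), ?_⟩
            show c = ((c 0 - a 0) / (b 0 - a 0)) • (b - a) +ᵥ a
            have hcomp : ∀ i : Fin 2, c i = (c 0 - a 0) / (b 0 - a 0) * (b i - a i) + a i := by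
              intro i
              fin_cases i
              · show c 0 = (c 0 - a 0) / (b 0 - a 0) * (b 0 - a 0) + a 0
                rw [div_mul_cancel₀ _ hsubne]; ring
              · show c 1 = (c 0 - a 0) / (b 0 - a 0) * (b 1 - a 1) + a 1
                field_simp
                linear_combination hexpr
            funext i
            simp only [vadd_eq_add, Pi.add_apply, Pi.smul_apply, Pi.sub_apply, smul_eq_mul]
            exact hcomp i
          · have hsubne : b 1 - a 1 ≠ 0 := sub_ne_zero.mpr hd
            refine ⟨(c 1 - a 1) / (b 1 - a 1), ?_⟩
            show c = ((c 1 - a 1) / (b 1 - a 1)) • (b - a) +ᵥ a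
            have hcomp : ∀ i : Fin 2, c i = (c 1 - a 1) / (b 1 - a 1) * (b i - a i) + a i := by
              intro i
              fin_cases i
              · show c 0 = (c 1 - a 1) / (b 1 - a 1) * (b 0 - a 0) + a 0
                field_simp
                linear_combination -hexpr
              · show c 1 = (c 1 - a 1) / (b 1 - a 1) * (b 1 - a 1) + a 1
                rw [div_mul_cancel₀ _ hsubne]; ring
            funext i
            simp only [vadd_eq_add, Pi.add_apply, Pi.smul_apply, Pi.sub_apply, smul_eq_mul]
            exact hcomp i
    exact (affineIndependent_iff_not_collinear.mp hv) hcol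
  -- barycentric coordinate functions
  set L0 : (Fin 2 → ℝ) → ℝ :=
    fun x => ((b 1 - c 1) * x 0 + (c 0 - b 0) * x 1 + (b 0 * c 1 - b 1 * c 0)) / D with hL0
  set L1 : (Fin 2 → ℝ) → ℝ :=
    fun x => ((c 1 - a 1) * x 0 + (a 0 - c 0) * x 1 + (c 0 * a 1 - c 1 * a 0)) / D with hL1
  set L2 : (Fin 2 → ℝ) → ℝ :=
    fun x => ((a 1 - b 1) * x 0 + (b 0 - a 0) * x 1 + (a 0 * b 1 - a 1 * b 0)) / D with hL2
  have hsum : ∀ x : Fin 2 → ℝ, L0 x + L1 x + L2 x = 1 := by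
    intro x
    simp only [hL0, hL1, hL2]
    field_simp
    rw [hD]
    ring
  have hrecon : ∀ (x : Fin 2 → ℝ) (i : Fin 2), L0 x * a i + L1 x * b i + L2 x * c i = x i := by
    intro x i
    fin_cases i
    · show L0 x * a 0 + L1 x * b 0 + L2 x * c 0 = x 0
      simp only [hL0, hL1, hL2]
      field_simp
      rw [hD]
      ring
    · show L0 x * a 1 + L1 x * b 1 + L2 x * c 1 = x 1
      simp only [hL0, hL1, hL2]
      field_simp
      rw [hD]
      ring
  have hL0a : L0 a = 1 := by simp only [hL0]; field_simp; rw [hD]; ring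
  have hL0b : L0 b = 0 := by simp only [hL0]; field_simp; ring
  have hL0c : L0 c = 0 := by simp only [hL0]; field_simp; ring
  have hL1a : L1 a = 0 := by simp only [hL1]; field_simp; ring
  have hL1b : L1 b = 1 := by simp only [hL1]; field_simp; rw [hD]; ring
  have hL1c : L1 c = 0 := by simp only [hL1]; field_simp; ring
  have hL2a : L2 a = 0 := by simp only [hL2]; field_simp; ring
  have hL2b : L2 b = 0 := by simp only [hL2]; field_simp; ring
  have hL2c : L2 c = 1 := by simp only [hL2]; field_simp; rw [hD]; ring
  -- convexity of the candidate set
  have haffL : ∀ (p q r : ℝ) (t s : ℝ) (x y : Fin 2 → ℝ), t + s = 1 →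
      (p * (t • x + s • y) 0 + q * (t • x + s • y) 1 + r) / D
        = t * ((p * x 0 + q * x 1 + r) / D) + s * ((p * y 0 + q * y 1 + r) / D) := by
    intro p q r t s x y hts
    simp only [Pi.add_apply, Pi.smul_apply, smul_eq_mul]
    linear_combination (-(r / D)) * hts
  have hconv : Convex ℝ {x : Fin 2 → ℝ | 0 ≤ L0 x ∧ 0 ≤ L1 x ∧ 0 ≤ L2 x} := by
    intro x hx y hy t s ht hs hts
    simp only [Set.mem_setOf_eq] at hx hy ⊢
    refine ⟨?_, ?_, ?_⟩
    · simp only [hL0]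
      rw [haffL _ _ _ t s x y hts]
      have e0 := hx.1; have e1 := hy.1
      simp only [hL0] at e0 e1
      exact add_nonneg (mul_nonneg ht e0) (mul_nonneg hs e1)
    · simp only [hL1]
      rw [haffL _ _ _ t s x y hts]
      have e0 := hx.2.1; have e1 := hy.2.1
      simp only [hL1] at e0 e1
      exact add_nonneg (mul_nonneg ht e0) (mul_nonneg hs e1)
    · simp only [hL2]
      rw [haffL _ _ _ t s x y hts]
      have e0 := hx.2.2; have e1 := hy.2.2
      simp only [hL2] at e0 e1
      exact add_nonneg (mul_nonneg ht e0) (mul_nonneg hs e1)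
  -- the hull is exactly the nonnegativity region of the barycentric coordinates
  have hhull : convexHull ℝ (Set.range v) = {x : Fin 2 → ℝ | 0 ≤ L0 x ∧ 0 ≤ L1 x ∧ 0 ≤ L2 x} := by
    apply Set.Subset.antisymm
    · apply convexHull_min _ hconv
      rintro p ⟨k, rfl⟩
      fin_cases k
      · show 0 ≤ L0 a ∧ 0 ≤ L1 a ∧ 0 ≤ L2 a
        rw [hL0a, hL1a, hL2a]
        norm_num
      · show 0 ≤ L0 b ∧ 0 ≤ L1 b ∧ 0 ≤ L2 b
        rw [hL0b, hL1b, hL2b]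
        norm_num
      · show 0 ≤ L0 c ∧ 0 ≤ L1 c ∧ 0 ≤ L2 c
        rw [hL0c, hL1c, hL2c]
        norm_num
    · intro x hx
      obtain ⟨h0, h1, h2⟩ := hx
      have hw0 : ∀ i ∈ (Finset.univ : Finset (Fin 3)), 0 ≤ ![L0 x, L1 x, L2 x] i := by
        intro i _
        fin_cases i
        · simpa using h0
        · simpa using h1
        · simpa using h2
      have hws : 0 < ∑ i ∈ (Finset.univ : Finset (Fin 3)), ![L0 x, L1 x, L2 x] i := by
        rw [Fin.sum_univ_three]
        simp only [Matrix.cons_val_zero, Matrix.cons_val_one, Matrix.head_cons,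
          Matrix.cons_val_two, Matrix.tail_cons]
        linarith [hsum x]
      have hz : ∀ i ∈ (Finset.univ : Finset (Fin 3)), v i ∈ Set.range v :=
        fun i _ => Set.mem_range_self i
      have hcm := Finset.centerMass_mem_convexHull (Finset.univ : Finset (Fin 3)) hw0 hws hz
      have hsum1 : ∑ i ∈ (Finset.univ : Finset (Fin 3)), ![L0 x, L1 x, L2 x] i = 1 := by
        rw [Fin.sum_univ_three]
        simp only [Matrix.cons_val_zero, Matrix.cons_val_one, Matrix.head_cons,
          Matrix.cons_val_two, Matrix.tail_cons]
        exact hsum x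
      have hxeq : (Finset.univ : Finset (Fin 3)).centerMass ![L0 x, L1 x, L2 x] v = x := by
        rw [Finset.centerMass, hsum1, inv_one, one_smul]
        funext i
        rw [Finset.sum_apply, Fin.sum_univ_three]
        simp only [Matrix.cons_val_zero, Matrix.cons_val_one, Matrix.head_cons,
          Matrix.cons_val_two, Matrix.tail_cons, Pi.smul_apply, smul_eq_mul]
        exact hrecon x i
      rw [← hxeq]
      exact hcm
  have hmemS : ∀ x : Fin 2 → ℝ, x ∈ S ↔ (0 ≤ L0 x ∧ 0 ≤ L1 x ∧ 0 ≤ L2 x) := by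
    intro x
    rw [hS, hhull]
    exact Iff.rfl
  -- the gradients are nonzero
  have hw0ne : (b 1 - c 1) / D ≠ 0 ∨ (c 0 - b 0) / D ≠ 0 := by
    by_contra hcon
    push_neg at hcon
    obtain ⟨h1, h2⟩ := hcon
    rw [div_eq_zero_iff] at h1 h2
    have e1 : b 1 - c 1 = 0 := h1.resolve_right hDne
    have e2 : c 0 - b 0 = 0 := h2.resolve_right hDne
    apply hDne
    rw [hD, show c 0 = b 0 by linarith, show c 1 = b 1 by linarith]
    ring
  have hw1ne : (c 1 - a 1) / D ≠ 0 ∨ (a 0 - c 0) / D ≠ 0 := by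
    by_contra hcon
    push_neg at hcon
    obtain ⟨h1, h2⟩ := hcon
    rw [div_eq_zero_iff] at h1 h2
    have e1 : c 1 - a 1 = 0 := h1.resolve_right hDne
    have e2 : a 0 - c 0 = 0 := h2.resolve_right hDne
    apply hDne
    rw [hD, show c 0 = a 0 by linarith, show c 1 = a 1 by linarith]
    ring
  have hw2ne : (a 1 - b 1) / D ≠ 0 ∨ (b 0 - a 0) / D ≠ 0 := by
    by_contra hcon
    push_neg at hcon
    obtain ⟨h1, h2⟩ := hcon
    rw [div_eq_zero_iff] at h1 h2
    have e1 : a 1 - b 1 = 0 := h1.resolve_right hDne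
    have e2 : b 0 - a 0 = 0 := h2.resolve_right hDne
    apply hDne
    rw [hD, show b 0 = a 0 by linarith, show b 1 = a 1 by linarith]
    ring
  -- rewriting the barycentric coordinates in affine normal form
  have hL0x : ∀ x : Fin 2 → ℝ,
      (b 1 - c 1) / D * x 0 + (c 0 - b 0) / D * x 1 + (b 0 * c 1 - b 1 * c 0) / D = L0 x := by
    intro x; simp only [hL0]; ring
  have hL1x : ∀ x : Fin 2 → ℝ,
      (c 1 - a 1) / D * x 0 + (a 0 - c 0) / D * x 1 + (c 0 * a 1 - c 1 * a 0) / D = L1 x := by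
    intro x; simp only [hL1]; ring
  have hL2x : ∀ x : Fin 2 → ℝ,
      (a 1 - b 1) / D * x 0 + (b 0 - a 0) / D * x 1 + (a 0 * b 1 - a 1 * b 0) / D = L2 x := by
    intro x; simp only [hL2]; ring
  -- small strips around the three edge lines
  obtain ⟨ε0, hε0pos, hT0⟩ := strip_small B (δ/3) hB0 (by linarith)
    ((b 1 - c 1) / D) ((c 0 - b 0) / D) ((b 0 * c 1 - b 1 * c 0) / D) hw0ne
  obtain ⟨ε1, hε1pos, hT1⟩ := strip_small B (δ/3) hB0 (by linarith)
    ((c 1 - a 1) / D) ((a 0 - c 0) / D) ((c 0 * a 1 - c 1 * a 0) / D) hw1ne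
  obtain ⟨ε2, hε2pos, hT2⟩ := strip_small B (δ/3) hB0 (by linarith)
    ((a 1 - b 1) / D) ((b 0 - a 0) / D) ((a 0 * b 1 - a 1 * b 0) / D) hw2ne
  set T0 := {x : Fin 2 → ℝ | x ∈ Set.Icc (fun _ => -B) (fun _ => B) ∧
    |(b 1 - c 1) / D * x 0 + (c 0 - b 0) / D * x 1 + (b 0 * c 1 - b 1 * c 0) / D| < ε0}
    with hT0def
  set T1 := {x : Fin 2 → ℝ | x ∈ Set.Icc (fun _ => -B) (fun _ => B) ∧
    |(c 1 - a 1) / D * x 0 + (a 0 - c 0) / D * x 1 + (c 0 * a 1 - c 1 * a 0) / D| < ε1}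
    with hT1def
  set T2 := {x : Fin 2 → ℝ | x ∈ Set.Icc (fun _ => -B) (fun _ => B) ∧
    |(a 1 - b 1) / D * x 0 + (b 0 - a 0) / D * x 1 + (a 0 * b 1 - a 1 * b 0) / D| < ε2}
    with hT2def
  -- constants
  set ε := min ε0 (min ε1 ε2) with hεdef
  have hεpos : 0 < ε := lt_min hε0pos (lt_min hε1pos hε2pos)
  set CL := |wl 0| * B + |wl 1| * B + |rl| with hCLdef
  set C0 := |(b 1 - c 1) / D| * B + |(c 0 - b 0) / D| * B + |(b 0 * c 1 - b 1 * c 0) / D|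
    with hC0def
  set C2 := |(a 1 - b 1) / D| * B + |(b 0 - a 0) / D| * B + |(a 0 * b 1 - a 1 * b 0) / D|
    with hC2def
  have hCLnn : 0 ≤ CL := by
    rw [hCLdef]
    have := mul_nonneg (abs_nonneg (wl 0)) hB0.le
    have := mul_nonneg (abs_nonneg (wl 1)) hB0.le
    have := abs_nonneg rl
    linarith
  have hC0nn : 0 ≤ C0 := by
    rw [hC0def]
    have := mul_nonneg (abs_nonneg ((b 1 - c 1) / D)) hB0.le
    have := mul_nonneg (abs_nonneg ((c 0 - b 0) / D)) hB0.le
    have := abs_nonneg ((b 0 * c 1 - b 1 * c 0) / D)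
    linarith
  have hC2nn : 0 ≤ C2 := by
    rw [hC2def]
    have := mul_nonneg (abs_nonneg ((a 1 - b 1) / D)) hB0.le
    have := mul_nonneg (abs_nonneg ((b 0 - a 0) / D)) hB0.le
    have := abs_nonneg ((a 0 * b 1 - a 1 * b 0) / D)
    linarith
  set Mc := (CL + 1) / ε with hMcdef
  have hMcpos : 0 < Mc := div_pos (by linarith) hεpos
  set muc := (CL + Mc * C0 + C2 + 1) / ε with hmucdef
  have hmucpos : 0 < muc := by
    apply div_pos _ hεpos
    have := mul_nonneg hMcpos.le hC0nn
    linarith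
  have hMcε : CL + 1 ≤ Mc * ε := by
    rw [hMcdef, div_mul_cancel₀ _ hεpos.ne']
  have hmucε : CL + Mc * C0 + C2 ≤ muc * ε := by
    rw [hmucdef, div_mul_cancel₀ _ hεpos.ne']
    linarith
  have hM2ε : CL + Mc * C0 ≤ muc * ε := by
    rw [hmucdef, div_mul_cancel₀ _ hεpos.ne']
    linarith
  -- bound for affine functions on the box
  have habs : ∀ (p q t : ℝ) (y : Fin 2 → ℝ), y ∈ Set.Icc (fun _ => -B) (fun _ => (B:ℝ)) →
      |p * y 0 + q * y 1 + t| ≤ |p| * B + |q| * B + |t| := by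
    intro p q t y hy
    rw [Set.mem_Icc] at hy
    have h0 : |y 0| ≤ B := abs_le.mpr ⟨hy.1 0, hy.2 0⟩
    have h1 : |y 1| ≤ B := abs_le.mpr ⟨hy.1 1, hy.2 1⟩
    have m0 : |p| * |y 0| ≤ |p| * B := mul_le_mul_of_nonneg_left h0 (abs_nonneg p)
    have m1 : |q| * |y 1| ≤ |q| * B := mul_le_mul_of_nonneg_left h1 (abs_nonneg q)
    calc |p * y 0 + q * y 1 + t| ≤ |p * y 0 + q * y 1| + |t| := abs_add_le _ _
      _ ≤ |p * y 0| + |q * y 1| + |t| := by linarith [abs_add_le (p * y 0) (q * y 1)]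
      _ = |p| * |y 0| + |q| * |y 1| + |t| := by rw [abs_mul, abs_mul]
      _ ≤ |p| * B + |q| * B + |t| := by linarith
  -- supply the network parameters
  refine ⟨![1, -1, 0], ![1, 1, 0], ![-muc, -muc, 0], ![0, 0, 0], ![muc, muc, 1],
    ![(fun x => ℓ x + Mc * L0 x), (fun x => Mc * L0 x), (fun _ => 0)],
    ![(fun x => -L2 x), (fun x => -L2 x), (fun _ => 0)],
    ![(fun x => -L1 x), (fun x => -L1 x), (fun _ => 0)], ?_, ?_, ?_, ?_, ?_⟩
  · intro k
    fin_cases k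
    · simpa using hmucpos
    · simpa using hmucpos
    · norm_num
  · intro k
    fin_cases k
    · show IsAffineFn (fun x => ℓ x + Mc * L0 x)
      refine ⟨![wl 0 + Mc * ((b 1 - c 1) / D), wl 1 + Mc * ((c 0 - b 0) / D)],
        rl + Mc * ((b 0 * c 1 - b 1 * c 0) / D), ?_⟩
      intro x
      show ℓ x + Mc * L0 x = _
      rw [hl x]
      simp only [Fin.sum_univ_two, hL0]
      simp only [Matrix.cons_val_zero, Matrix.cons_val_one, Matrix.head_cons]
      ring
    · show IsAffineFn (fun x => Mc * L0 x)
      refine ⟨![Mc * ((b 1 - c 1) / D), Mc * ((c 0 - b 0) / D)],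
        Mc * ((b 0 * c 1 - b 1 * c 0) / D), ?_⟩
      intro x
      show Mc * L0 x = _
      simp only [Fin.sum_univ_two, hL0]
      simp only [Matrix.cons_val_zero, Matrix.cons_val_one, Matrix.head_cons]
      ring
    · show IsAffineFn (fun _ => (0:ℝ))
      exact ⟨![0, 0], 0, by intro x; simp⟩
  · intro k
    fin_cases k
    · show IsAffineFn (fun x => -L2 x)
      refine ⟨![-((a 1 - b 1) / D), -((b 0 - a 0) / D)], -((a 0 * b 1 - a 1 * b 0) / D), ?_⟩
      intro x
      show -L2 x = _
      simp only [Fin.sum_univ_two, hL2]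
      simp only [Matrix.cons_val_zero, Matrix.cons_val_one, Matrix.head_cons]
      ring
    · show IsAffineFn (fun x => -L2 x)
      refine ⟨![-((a 1 - b 1) / D), -((b 0 - a 0) / D)], -((a 0 * b 1 - a 1 * b 0) / D), ?_⟩
      intro x
      show -L2 x = _
      simp only [Fin.sum_univ_two, hL2]
      simp only [Matrix.cons_val_zero, Matrix.cons_val_one, Matrix.head_cons]
      ring
    · show IsAffineFn (fun _ => (0:ℝ))
      exact ⟨![0, 0], 0, by intro x; simp⟩
  · intro k
    fin_cases k
    · show IsAffineFn (fun x => -L1 x)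
      refine ⟨![-((c 1 - a 1) / D), -((a 0 - c 0) / D)], -((c 0 * a 1 - c 1 * a 0) / D), ?_⟩
      intro x
      show -L1 x = _
      simp only [Fin.sum_univ_two, hL1]
      simp only [Matrix.cons_val_zero, Matrix.cons_val_one, Matrix.head_cons]
      ring
    · show IsAffineFn (fun x => -L1 x)
      refine ⟨![-((c 1 - a 1) / D), -((a 0 - c 0) / D)], -((c 0 * a 1 - c 1 * a 0) / D), ?_⟩
      intro x
      show -L1 x = _
      simp only [Fin.sum_univ_two, hL1]
      simp only [Matrix.cons_val_zero, Matrix.cons_val_one, Matrix.head_cons]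
      ring
    · show IsAffineFn (fun _ => (0:ℝ))
      exact ⟨![0, 0], 0, by intro x; simp⟩
  -- the measure estimate
  · refine lt_of_le_of_lt (measure_mono (show _ ⊆ (T0 ∪ T1) ∪ T2 from ?_)) ?_
    · -- the mismatch set is contained in the union of the three strips
      intro x hx
      obtain ⟨hxbox, hne⟩ := hx
      show x ∈ (T0 ∪ T1) ∪ T2
      by_contra hxT
      simp only [Set.mem_union, not_or] at hxT
      obtain ⟨⟨hx0, hx1⟩, hx2⟩ := hxT
      rw [hT0def] at hx0
      rw [hT1def] at hx1
      rw [hT2def] at hx2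
      simp only [Set.mem_setOf_eq, not_and, not_lt] at hx0 hx1 hx2
      have k0 : ε0 ≤ |L0 x| := by rw [← hL0x x]; exact hx0 hxbox
      have k1 : ε1 ≤ |L1 x| := by rw [← hL1x x]; exact hx1 hxbox
      have k2 : ε2 ≤ |L2 x| := by rw [← hL2x x]; exact hx2 hxbox
      have hpε : ε ≤ |L0 x| := le_trans (min_le_left _ _) k0
      have hqε : ε ≤ |L1 x| :=
        le_trans (le_trans (min_le_right _ _) (min_le_left _ _)) k1
      have hsε : ε ≤ |L2 x| :=
        le_trans (le_trans (min_le_right _ _) (min_le_right _ _)) k2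
      have hCLx : |ℓ x| ≤ CL := by
        rw [hl x, Fin.sum_univ_two, hCLdef]
        exact habs (wl 0) (wl 1) rl x hxbox
      have hC0x : |L0 x| ≤ C0 := by
        rw [← hL0x x, hC0def]
        exact habs _ _ _ x hxbox
      have hC2x : |L2 x| ≤ C2 := by
        rw [← hL2x x, hC2def]
        exact habs _ _ _ x hxbox
      have hfx : f x = if 0 ≤ L0 x ∧ 0 ≤ L1 x ∧ 0 ≤ L2 x then ℓ x else 0 := by
        by_cases hxS : x ∈ S
        · rw [hf, Set.indicator_of_mem hxS, if_pos ((hmemS x).mp hxS)]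
        · rw [hf, Set.indicator_of_notMem hxS, if_neg (fun hc => hxS ((hmemS x).mpr hc))]
      apply hne
      rw [Fin.sum_univ_three]
      simp only [Matrix.cons_val_zero, Matrix.cons_val_one, Matrix.head_cons,
        Matrix.cons_val_two, Matrix.tail_cons]
      simp only [one_mul, zero_mul, add_zero, neg_mul, ← sub_eq_add_neg]
      rw [hfx]
      exact key_eq (ℓ x) (L0 x) (L1 x) (L2 x) Mc muc muc CL C0 C2 ε hεpos
        hCLx hC0x hC2x hMcε hmucε hM2ε hmucpos.le hmucpos.le hpε hqε hsε
    · calc volume ((T0 ∪ T1) ∪ T2) ≤ volume (T0 ∪ T1) + volume T2 := measure_union_le _ _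
        _ ≤ volume T0 + volume T1 + volume T2 := by
            exact add_le_add (measure_union_le _ _) le_rfl
        _ < ENNReal.ofReal (δ/3) + ENNReal.ofReal (δ/3) + ENNReal.ofReal (δ/3) :=
            ENNReal.add_lt_add (ENNReal.add_lt_add hT0 hT1) hT2
        _ = ENNReal.ofReal δ := by
            rw [← ENNReal.ofReal_add (by linarith) (by linarith),
              ← ENNReal.ofReal_add (by linarith) (by linarith),
              show δ/3 + δ/3 + δ/3 = δ by ring]
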